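/- For any basic lattice B, the Stone space B̂ of ≺-ultrafilters (topologized by the sets O_x = {U ∈ B̂ : x ∈ U}) is a locally compact Hausdorff space; moreover O_x ∩ O_y = O_{x∧y}, O_x ∪ O_y = O_{x∨y}, O_x ∩ O_y = ∅ iff x ∧ y = 0, and closure(O_x) ⊆ O_y iff x ≺ y, with closure(O_x) compact for every x. -/
import Mathlib


/-- A basic lattice: a transitive relation `prec` (≺) with minimum `zero`,
whose reflexivization `ple` (⪯) is a lattice order with meet `inf` and join `sup`,
satisfying coinitiality, cofinality, interpolation, multiplicativity, additivity,
decomposition and complementation. -/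
structure BasicLattice (B : Type) where
  prec : B → B → Prop
  zero : B
  inf : B → B → B
  sup : B → B → B
  trans : ∀ {x y z : B}, prec x y → prec y z → prec x z
  min : ∀ x, prec zero x
  antisymm : ∀ x y, (∀ z, prec z x → prec z y) → (∀ z, prec z y → prec z x) → x = y
  inf_le_left : ∀ x y z, prec z (inf x y) → prec z x
  inf_le_right : ∀ x y z, prec z (inf x y) → prec z y
  le_inf : ∀ x y w, (∀ z, prec z w → prec z x) → (∀ z, prec z w → prec z y) →
    ∀ z, prec z w → prec z (inf x y)
  le_sup_left : ∀ x y z, prec z x → prec z (sup x y)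
  le_sup_right : ∀ x y z, prec z y → prec z (sup x y)
  sup_le : ∀ x y w, (∀ z, prec z x → prec z w) → (∀ z, prec z y → prec z w) →
    ∀ z, prec z (sup x y) → prec z w
  coinit : ∀ x, x ≠ zero → ∃ z, z ≠ zero ∧ prec z x
  cofin : ∀ x, ∃ y, prec x y
  interp : ∀ x y, prec x y → ∃ z, prec x z ∧ prec z y
  mult : ∀ x x' y y', prec x x' → prec y y' → prec (inf x y) (inf x' y')
  add : ∀ x x' y y', prec x x' → prec y y' → prec (sup x y) (sup x' y')
  decomp : ∀ x y z, prec z (sup x y) → ∃ x' y', prec x' x ∧ prec y' y ∧ z = sup x' y'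
  compl : ∀ x y z, prec x y → prec y z → ∃ w, inf w x = zero ∧ sup w y = z

/-- The reflexivization ⪯ of ≺. -/
def BasicLattice.ple {B : Type} (L : BasicLattice B) (x y : B) : Prop :=
  ∀ z, L.prec z x → L.prec z y

/-- A ≺-filter: ≻-closed and ≺-directed. -/
def BasicLattice.IsPrecFilter {B : Type} (L : BasicLattice B) (U : Set B) : Prop :=
  (∀ x y, y ∈ U → L.prec y x → x ∈ U) ∧
  (∀ x y, x ∈ U → y ∈ U → ∃ z ∈ U, L.prec z x ∧ L.prec z y)

/-- A ≺-ultrafilter: a maximal proper ≺-filter. -/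
def BasicLattice.IsUltra {B : Type} (L : BasicLattice B) (U : Set B) : Prop :=
  L.IsPrecFilter U ∧ U ≠ Set.univ ∧
  ∀ V, L.IsPrecFilter V → V ≠ Set.univ → U ⊆ V → U = V

/-- The Stone space of a basic lattice: the set of ≺-ultrafilters. -/
def BasicLattice.Spec {B : Type} (L : BasicLattice B) : Type :=
  {U : Set B // L.IsUltra U}

/-- Basic open sets of the Stone space. -/
def BasicLattice.Ox {B : Type} (L : BasicLattice B) (x : B) : Set L.Spec :=
  {U | x ∈ U.1}

/-- The topology on the Stone space, generated by the sets O_x. -/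
instance {B : Type} (L : BasicLattice B) : TopologicalSpace L.Spec :=
  TopologicalSpace.generateFrom {S | ∃ x : B, S = L.Ox x}

namespace BasicLattice

variable {B : Type} {L : BasicLattice B}

/-! ### Basic order lemmas -/

lemma prec_zero {z : B} (h : L.prec z L.zero) : z = L.zero :=
  L.antisymm z L.zero (fun w hw => L.trans hw h) (fun w hw => L.trans hw (L.min z))

lemma eq_zero_of_forall {a : B} (h : ∀ s, L.prec s a → s = L.zero) : a = L.zero :=
  L.antisymm a L.zero (fun s hs => by rw [h s hs]; exact L.min L.zero)
    (fun s hs => L.trans hs (L.min a))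

lemma prec_ple {a b c : B} (h1 : L.prec a b) (h2 : L.ple b c) : L.prec a c := h2 a h1

lemma ple_of_prec {a b : B} (h : L.prec a b) : L.ple a b := fun _ hz => L.trans hz h

lemma inf_self (a : B) : L.inf a a = a :=
  L.antisymm _ _ (fun z hz => L.inf_le_left a a z hz)
    (fun z hz => L.le_inf a a a (fun _ hw => hw) (fun _ hw => hw) z hz)

lemma sup_self (a : B) : L.sup a a = a :=
  L.antisymm _ _ (fun z hz => L.sup_le a a a (fun _ hw => hw) (fun _ hw => hw) z hz)
    (fun z hz => L.le_sup_left a a z hz)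

lemma mult' {a b c : B} (h1 : L.prec a b) (h2 : L.prec a c) : L.prec a (L.inf b c) := by
  have h := L.mult a b a c h1 h2
  rwa [inf_self] at h

lemma add' {a b c : B} (h1 : L.prec a c) (h2 : L.prec b c) : L.prec (L.sup a b) c := by
  have h := L.add a c b c h1 h2
  rwa [sup_self] at h

lemma ple_prec {a b c : B} (h1 : L.ple a b) (h2 : L.prec b c) : L.prec a c := by
  obtain ⟨t, ht⟩ := L.cofin a
  obtain ⟨d, hbd, hdc⟩ := L.interp b c h2
  have hab : L.inf a b = a :=
    L.antisymm _ _ (fun z hz => L.inf_le_left a b z hz)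
      (fun z hz => L.le_inf a b a (fun _ hw => hw) h1 z hz)
  have h3 : L.prec (L.inf a b) (L.inf t d) := L.mult a t b d ht hbd
  rw [hab] at h3
  exact L.trans (L.inf_le_right t d a h3) hdc

lemma sup_zero_right (a : B) : L.sup a L.zero = a :=
  L.antisymm _ _
    (fun z hz => L.sup_le a L.zero a (fun _ hw => hw) (fun w hw => L.trans hw (L.min a)) z hz)
    (fun z hz => L.le_sup_left a L.zero z hz)

lemma prec_sup_comm {z a b : B} (h : L.prec z (L.sup a b)) : L.prec z (L.sup b a) :=
  L.sup_le a b (L.sup b a) (fun w hw => L.le_sup_right b a w hw)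
    (fun w hw => L.le_sup_left b a w hw) z h

/-- If `q ≺ T = r ∨ v` and nothing nonzero is below both `q` and `v`, then `q ≺ r`. -/
lemma prec_cancel {q r v T : B} (hq : L.prec q T) (hT : L.sup r v = T)
    (hqv : ∀ s, L.prec s q → L.prec s v → s = L.zero) : L.prec q r := by
  rw [← hT] at hq
  obtain ⟨g, h', hgr, hh'v, hqeq⟩ := L.decomp r v q hq
  have h0 : h' = L.zero := eq_zero_of_forall fun s hs =>
    hqv s (by rw [hqeq]; exact L.le_sup_right g h' s hs) (L.trans hs hh'v)
  rw [h0, sup_zero_right] at hqeq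
  rw [hqeq]; exact hgr

/-! ### Filter lemmas -/

lemma mem_up {U : Set B} (hU : L.IsPrecFilter U) {a b : B} (ha : a ∈ U) (hab : L.prec a b) :
    b ∈ U := hU.1 b a ha hab

lemma mem_round {U : Set B} (hU : L.IsPrecFilter U) {a : B} (ha : a ∈ U) :
    ∃ z ∈ U, L.prec z a := by
  obtain ⟨z, hz, h1, _⟩ := hU.2 a a ha ha
  exact ⟨z, hz, h1⟩

lemma univ_of_zero_mem {U : Set B} (hU : L.IsPrecFilter U) (h0 : L.zero ∈ U) : U = Set.univ :=
  Set.eq_univ_of_forall fun w => hU.1 w L.zero h0 (L.min w)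

lemma zero_notMem {U : Set B} (hU : L.IsPrecFilter U) (hp : U ≠ Set.univ) : L.zero ∉ U :=
  fun h => hp (univ_of_zero_mem hU h)

lemma mem_ne_zero {U : Set B} (hU : L.IsPrecFilter U) (hp : U ≠ Set.univ) {a : B} (ha : a ∈ U) :
    a ≠ L.zero := fun h => zero_notMem hU hp (h ▸ ha)

lemma meet_ne_zero {U : Set B} (hU : L.IsPrecFilter U) (hp : U ≠ Set.univ) {a b : B}
    (ha : a ∈ U) (hb : b ∈ U) : L.inf a b ≠ L.zero := by
  obtain ⟨z, hz, za, zb⟩ := hU.2 a b ha hb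
  intro h
  have h2 : L.prec z L.zero := h ▸ mult' za zb
  exact mem_ne_zero hU hp hz (prec_zero h2)

lemma Uz_spec {z : B} (hz : z ≠ L.zero) :
    L.IsPrecFilter {v | L.prec z v} ∧ {v | L.prec z v} ≠ Set.univ := by
  refine ⟨⟨?_, ?_⟩, ?_⟩
  · intro a b hb hba
    exact L.trans hb hba
  · intro a b ha hb
    obtain ⟨ρ, h1, h2⟩ := L.interp z (L.inf a b) (mult' ha hb)
    exact ⟨ρ, h1, L.inf_le_left a b ρ h2, L.inf_le_right a b ρ h2⟩
  · intro h
    have h2 : L.prec z L.zero := Set.eq_univ_iff_forall.mp h L.zero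
    exact hz (prec_zero h2)

lemma chain_union {c : Set (Set B)} (hc : IsChain (· ⊆ ·) c)
    (hall : ∀ V ∈ c, L.IsPrecFilter V ∧ V ≠ Set.univ) :
    L.IsPrecFilter (⋃₀ c) ∧ ⋃₀ c ≠ Set.univ := by
  refine ⟨⟨?_, ?_⟩, ?_⟩
  · rintro r z ⟨V, hVc, hzV⟩ hzr
    exact ⟨V, hVc, (hall V hVc).1.1 r z hzV hzr⟩
  · rintro z₁ z₂ ⟨V₁, hV₁c, h₁⟩ ⟨V₂, hV₂c, h₂⟩
    rcases hc.total hV₁c hV₂c with h | h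
    · obtain ⟨w, hw, hw1, hw2⟩ := (hall V₂ hV₂c).1.2 z₁ z₂ (h h₁) h₂
      exact ⟨w, ⟨V₂, hV₂c, hw⟩, hw1, hw2⟩
    · obtain ⟨w, hw, hw1, hw2⟩ := (hall V₁ hV₁c).1.2 z₁ z₂ h₁ (h h₂)
      exact ⟨w, ⟨V₁, hV₁c, hw⟩, hw1, hw2⟩
  · intro h
    have h0 : L.zero ∈ ⋃₀ c := by rw [h]; trivial
    obtain ⟨V, hVc, h0V⟩ := h0
    exact (hall V hVc).2 (univ_of_zero_mem (hall V hVc).1 h0V)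

lemma exists_ultra_extension {V₀ : Set B} (h0 : L.IsPrecFilter V₀) (hp : V₀ ≠ Set.univ) :
    ∃ U, L.IsUltra U ∧ V₀ ⊆ U := by
  obtain ⟨m, hV₀m, hm⟩ := zorn_subset_nonempty {V | L.IsPrecFilter V ∧ V ≠ Set.univ}
    (fun c hcS hc hcne => ⟨⋃₀ c, chain_union hc (fun V hV => hcS hV),
      fun s hs => Set.subset_sUnion_of_mem hs⟩) V₀ ⟨h0, hp⟩
  exact ⟨m, ⟨hm.prop.1, hm.prop.2,
    fun V hVf hVp hmV => Set.Subset.antisymm hmV (hm.2 ⟨hVf, hVp⟩ hmV)⟩, hV₀m⟩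

lemma exists_ultra_mem {a : B} (ha : a ≠ L.zero) : ∃ U, L.IsUltra U ∧ a ∈ U := by
  obtain ⟨z, hz0, hza⟩ := L.coinit a ha
  obtain ⟨hUzf, hUzp⟩ := Uz_spec (L := L) hz0
  obtain ⟨U, hU, hsub⟩ := exists_ultra_extension hUzf hUzp
  exact ⟨U, hU, hsub hza⟩

lemma ultra_nonempty (hB : ∃ b : B, b ≠ L.zero) {U : Set B} (hU : L.IsUltra U) :
    U.Nonempty := by
  by_contra h
  rw [Set.not_nonempty_iff_eq_empty] at h
  obtain ⟨b, hb⟩ := hB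
  obtain ⟨z, hz0, _⟩ := L.coinit b hb
  obtain ⟨hUzf, hUzp⟩ := Uz_spec (L := L) hz0
  have he := hU.2.2 _ hUzf hUzp (by rw [h]; exact Set.empty_subset _)
  obtain ⟨t, ht⟩ := L.cofin z
  have htU : t ∈ U := by rw [he]; exact ht
  rw [h] at htU
  exact htU

/-! ### The key extension lemma for ultrafilters -/

lemma ext_filter {U : Set B} (hUf : L.IsPrecFilter U) (hUne : U.Nonempty) (c : B)
    (hc : ∀ u ∈ U, L.inf c u ≠ L.zero) :
    L.IsPrecFilter {r | ∃ u ∈ U, L.prec (L.inf c u) r} ∧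
      {r | ∃ u ∈ U, L.prec (L.inf c u) r} ≠ Set.univ ∧
      U ⊆ {r | ∃ u ∈ U, L.prec (L.inf c u) r} := by
  refine ⟨⟨?_, ?_⟩, ?_, ?_⟩
  · rintro r z ⟨u, hu, hcu⟩ hzr
    exact ⟨u, hu, L.trans hcu hzr⟩
  · rintro r₁ r₂ ⟨u₁, hu₁, h₁⟩ ⟨u₂, hu₂, h₂⟩
    obtain ⟨u, hu, hu1, hu2⟩ := hUf.2 u₁ u₂ hu₁ hu₂
    have hle1 : L.ple (L.inf c u) (L.inf c u₁) := fun z hz =>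
      mult' (L.inf_le_left c u z hz) (L.trans (L.inf_le_right c u z hz) hu1)
    have hle2 : L.ple (L.inf c u) (L.inf c u₂) := fun z hz =>
      mult' (L.inf_le_left c u z hz) (L.trans (L.inf_le_right c u z hz) hu2)
    have hr1 : L.prec (L.inf c u) r₁ := ple_prec hle1 h₁
    have hr2 : L.prec (L.inf c u) r₂ := ple_prec hle2 h₂
    obtain ⟨ρ, hρ1, hρ2⟩ := L.interp _ _ (mult' hr1 hr2)
    exact ⟨ρ, ⟨u, hu, hρ1⟩, L.inf_le_left r₁ r₂ ρ hρ2, L.inf_le_right r₁ r₂ ρ hρ2⟩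
  · intro h
    have h0 : L.zero ∈ {r | ∃ u ∈ U, L.prec (L.inf c u) r} := by rw [h]; trivial
    obtain ⟨u, hu, hcu⟩ := h0
    exact hc u hu (prec_zero hcu)
  · intro u hu
    obtain ⟨u', hu', hu'u⟩ := mem_round hUf hu
    exact ⟨u', hu', ple_prec (fun z hz => L.inf_le_right c u' z hz) hu'u⟩

lemma key {U : Set B} (hU : L.IsUltra U) (hne : U.Nonempty) {c : B}
    (hc : ∀ u ∈ U, L.inf c u ≠ L.zero) {y : B} (hcy : L.prec c y) : y ∈ U := by
  obtain ⟨hVf, hVp, hUV⟩ := ext_filter hU.1 hne c hc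
  have hUeq := hU.2.2 _ hVf hVp hUV
  rw [hUeq]
  obtain ⟨u₀, hu₀⟩ := hne
  exact ⟨u₀, hu₀, ple_prec (fun z hz => L.inf_le_left c u₀ z hz) hcy⟩

lemma cl_mem {U : Set B} (hU : L.IsUltra U) (hne : U.Nonempty) {x y : B} (hxy : L.prec x y)
    (h : ∀ u ∈ U, L.inf u x ≠ L.zero) : y ∈ U := by
  obtain ⟨z, hxz, hzy⟩ := L.interp x y hxy
  refine key hU hne (c := z) ?_ hzy
  intro u hu h0
  obtain ⟨s, hs0, hs⟩ := L.coinit _ (h u hu)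
  have hsz : L.prec s z := L.trans (L.inf_le_right u x s hs) hxz
  have hsu : L.prec s u := L.inf_le_left u x s hs
  have h2 : L.prec s (L.inf z u) := mult' hsz hsu
  rw [h0] at h2
  exact hs0 (prec_zero h2)

lemma sup_split {U : Set B} (hU : L.IsUltra U) {a b : B} (hab : L.sup a b ∈ U) :
    a ∈ U ∨ b ∈ U := by
  by_contra h
  push_neg at h
  obtain ⟨ha, hb⟩ := h
  have hne : U.Nonempty := ⟨_, hab⟩
  obtain ⟨z, hz, hzs⟩ := mem_round hU.1 hab
  obtain ⟨a', b', ha', hb', hzeq⟩ := L.decomp a b z hzs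
  have hk1 : ∃ u ∈ U, L.inf a' u = L.zero := by
    by_contra h1; push_neg at h1
    exact ha (key hU hne h1 ha')
  have hk2 : ∃ u ∈ U, L.inf b' u = L.zero := by
    by_contra h1; push_neg at h1
    exact hb (key hU hne h1 hb')
  obtain ⟨u1, hu1, h01⟩ := hk1
  obtain ⟨u2, hu2, h02⟩ := hk2
  obtain ⟨u3, hu3, h31, h32⟩ := hU.1.2 u1 u2 hu1 hu2
  obtain ⟨u, hu, hu3', huz⟩ := hU.1.2 u3 z hu3 hz
  have huz' : L.prec u (L.sup a' b') := hzeq ▸ huz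
  obtain ⟨a'', b'', ha'', hb'', hueq⟩ := L.decomp a' b' u huz'
  have ha0 : a'' = L.zero := by
    apply eq_zero_of_forall
    intro s hs
    have hsu1 : L.prec s u1 := by
      have hsu : L.prec s u := by rw [hueq]; exact L.le_sup_left a'' b'' s hs
      exact L.trans hsu (L.trans hu3' h31)
    have h2 := mult' (L.trans hs ha'') hsu1
    rw [h01] at h2
    exact prec_zero h2
  have hb0 : b'' = L.zero := by
    apply eq_zero_of_forall
    intro s hs
    have hsu2 : L.prec s u2 := by
      have hsu : L.prec s u := by rw [hueq]; exact L.le_sup_right a'' b'' s hs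
      exact L.trans hsu (L.trans hu3' h32)
    have h2 := mult' (L.trans hs hb'') hsu2
    rw [h02] at h2
    exact prec_zero h2
  rw [ha0, hb0, sup_zero_right] at hueq
  exact zero_notMem hU.1 hU.2.1 (hueq ▸ hu)

end BasicLattice
namespace BasicLattice

variable {B : Type} {L : BasicLattice B}

/-! ### Basic opens -/

lemma isOpen_Ox (x : B) : IsOpen (L.Ox x) :=
  TopologicalSpace.isOpen_generateFrom_of_mem ⟨x, rfl⟩

lemma Ox_mono {a b : B} (h : L.ple a b) : L.Ox a ⊆ L.Ox b := by
  intro U ha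
  obtain ⟨z, hz, hza⟩ := mem_round U.2.1 ha
  exact mem_up U.2.1 hz (h z hza)

lemma Ox_inf (a b : B) : L.Ox a ∩ L.Ox b = L.Ox (L.inf a b) := by
  ext U
  constructor
  · rintro ⟨ha, hb⟩
    obtain ⟨z, hz, za, zb⟩ := U.2.1.2 a b ha hb
    exact mem_up U.2.1 hz (mult' za zb)
  · intro h
    exact ⟨Ox_mono (fun z hz => L.inf_le_left a b z hz) h,
      Ox_mono (fun z hz => L.inf_le_right a b z hz) h⟩

lemma Ox_zero : L.Ox L.zero = (∅ : Set L.Spec) :=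
  Set.eq_empty_iff_forall_notMem.mpr fun U h => zero_notMem U.2.1 U.2.2.1 h

lemma Ox_sup (a b : B) : L.Ox a ∪ L.Ox b = L.Ox (L.sup a b) := by
  ext U
  constructor
  · rintro (h | h)
    · exact Ox_mono (fun z hz => L.le_sup_left a b z hz) h
    · exact Ox_mono (fun z hz => L.le_sup_right a b z hz) h
  · intro h
    exact sup_split U.2 h

lemma Ox_disjoint (a b : B) : L.Ox a ∩ L.Ox b = ∅ ↔ L.inf a b = L.zero := by
  constructor
  · intro h
    by_contra h0
    obtain ⟨W, hW, hmem⟩ := exists_ultra_mem h0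
    have h2 : (⟨W, hW⟩ : L.Spec) ∈ L.Ox a ∩ L.Ox b := by rw [Ox_inf]; exact hmem
    rw [h] at h2
    exact h2
  · intro h
    rw [Ox_inf, h, Ox_zero]

lemma mem_closure_meets {x : B} {U : L.Spec} (h : U ∈ closure (L.Ox x)) :
    ∀ u ∈ U.1, L.inf u x ≠ L.zero := by
  intro u hu h0
  obtain ⟨W, hWu, hWx⟩ := mem_closure_iff.mp h (L.Ox u) (isOpen_Ox u) hu
  exact meet_ne_zero W.2.1 W.2.2.1 hWu hWx h0

lemma basis (hB : ∃ b : B, b ≠ L.zero) :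
    TopologicalSpace.IsTopologicalBasis {S : Set L.Spec | ∃ x, S = L.Ox x} := by
  refine ⟨?_, ?_, rfl⟩
  · rintro t₁ ⟨a, rfl⟩ t₂ ⟨b, rfl⟩ U hU
    exact ⟨L.Ox (L.inf a b), ⟨_, rfl⟩, by rw [← Ox_inf]; exact hU,
      by rw [← Ox_inf]⟩
  · apply Set.eq_univ_of_forall
    intro U
    obtain ⟨a, ha⟩ := ultra_nonempty hB U.2
    exact ⟨L.Ox a, ⟨a, rfl⟩, ha⟩

lemma mem_closure_of_meets (hB : ∃ b : B, b ≠ L.zero) {x : B} {U : L.Spec}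
    (h : ∀ u ∈ U.1, L.inf u x ≠ L.zero) : U ∈ closure (L.Ox x) := by
  rw [(basis hB).mem_closure_iff]
  rintro o ⟨a, rfl⟩ ha
  obtain ⟨W, hW, haW⟩ := exists_ultra_mem (h a ha)
  have h2 : (⟨W, hW⟩ : L.Spec) ∈ L.Ox a ∩ L.Ox x := by rw [Ox_inf]; exact haW
  exact ⟨_, h2⟩

lemma closure_Ox_subset {a b : B} (h : L.prec a b) : closure (L.Ox a) ⊆ L.Ox b := by
  intro U hU
  rcases (L.Ox a).eq_empty_or_nonempty with he | ⟨W, hW⟩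
  · rw [he, closure_empty] at hU
    exact absurd hU (Set.notMem_empty U)
  · have ha0 : a ≠ L.zero := mem_ne_zero W.2.1 W.2.2.1 hW
    exact cl_mem U.2 (ultra_nonempty ⟨a, ha0⟩ U.2) h (mem_closure_meets hU)

lemma t2 : T2Space L.Spec := by
  constructor
  intro U V hUV
  have h1 : ¬ U.1 ⊆ V.1 := fun hsub =>
    hUV (Subtype.ext (U.2.2.2 V.1 V.2.1 V.2.2.1 hsub))
  obtain ⟨a, haU, haV⟩ := Set.not_subset.mp h1
  have ha0 : a ≠ L.zero := mem_ne_zero U.2.1 U.2.2.1 haU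
  obtain ⟨a₁, ha₁U, ha₁a⟩ := mem_round U.2.1 haU
  have hVne : V.1.Nonempty := ultra_nonempty ⟨a, ha0⟩ V.2
  have hex : ∃ u ∈ V.1, L.inf a₁ u = L.zero := by
    by_contra hcon; push_neg at hcon
    exact haV (key V.2 hVne hcon ha₁a)
  obtain ⟨u, huV, h0⟩ := hex
  refine ⟨L.Ox a₁, L.Ox u, isOpen_Ox _, isOpen_Ox _, ha₁U, huV, ?_⟩
  rw [Set.disjoint_left]
  intro W hW1 hW2
  exact meet_ne_zero W.2.1 W.2.2.1 hW1 hW2 h0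

end BasicLattice
namespace BasicLattice

/-- The invariant used in the Zorn construction for `exists_ultra_of_not_prec`:
no relative complement of a member of `V` can absorb `x` over `y`. -/
def Star {B : Type} (L : BasicLattice B) (x y : B) (V : Set B) : Prop :=
  ∀ v ∈ V, ∀ w, L.inf w v = L.zero → ¬ L.prec x (L.sup y w)

variable {B : Type} {L : BasicLattice B}

lemma exists_ultra_of_not_prec {x y : B} (hxy : ¬ L.prec x y) :
    ∃ U : Set B, L.IsUltra U ∧ (∀ u ∈ U, L.inf u x ≠ L.zero) ∧ y ∉ U := by
  have hx0 : x ≠ L.zero := fun h => hxy (by rw [h]; exact L.min y)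
  set V₀ : Set B := {v | L.prec x v} with hV₀def
  set P : Set (Set B) := {V | (L.IsPrecFilter V ∧ V ≠ Set.univ) ∧ V₀ ⊆ V ∧ Star L x y V}
    with hPdef
  -- V₀ belongs to P
  have hV₀P : V₀ ∈ P := by
    refine ⟨Uz_spec hx0, le_refl _, ?_⟩
    intro v hv w hw hp
    obtain ⟨m, hxm, hm⟩ := L.interp x _ hp
    obtain ⟨a, b, hay, hbw, hmeq⟩ := L.decomp y w m hm
    have h1 : L.prec x (L.inf m v) := mult' hxm hv
    have h2 : L.ple (L.inf m v) a := by
      intro z hz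
      have hzm : L.prec z m := L.inf_le_left m v z hz
      rw [hmeq] at hzm
      refine prec_cancel hzm rfl ?_
      intro s hsz hsb
      have h3 : L.prec s (L.inf w v) :=
        mult' (L.trans hsb hbw) (L.trans hsz (L.inf_le_right m v z hz))
      rw [hw] at h3
      exact prec_zero h3
    exact hxy (L.trans (prec_ple h1 h2) hay)
  -- Zorn
  obtain ⟨U, hV₀U, hUmax⟩ := zorn_subset_nonempty P (by
    intro c hcP hc hcne
    refine ⟨⋃₀ c, ⟨chain_union hc (fun V hV => (hcP hV).1), ?_, ?_⟩,
      fun s hs => Set.subset_sUnion_of_mem hs⟩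
    · obtain ⟨V, hV⟩ := hcne
      exact (hcP hV).2.1.trans (Set.subset_sUnion_of_mem hV)
    · rintro v ⟨V, hVc, hvV⟩ w hw
      exact (hcP hVc).2.2 v hvV w hw) V₀ hV₀P
  obtain ⟨⟨hUf, hUp⟩, hUV₀, hUstar⟩ := hUmax.prop
  have hUne : U.Nonempty := by
    obtain ⟨t₀, ht₀⟩ := L.cofin x
    exact ⟨t₀, hUV₀ ht₀⟩
  -- U is an ultrafilter
  have hultra : L.IsUltra U := by
    refine ⟨hUf, hUp, ?_⟩
    intro W hWf hWp hUW
    by_contra hne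
    have hWnP : W ∉ P := fun hWP =>
      hne (Set.Subset.antisymm hUW (hUmax.2 hWP hUW))
    have hWstar : ¬ Star L x y W := fun hs =>
      hWnP ⟨⟨hWf, hWp⟩, hUV₀.trans hUW, hs⟩
    simp only [Star, not_forall] at hWstar
    obtain ⟨v₁, hv₁W, wt, hwtv₁, hxwt⟩ := hWstar
    rw [not_not] at hxwt
    obtain ⟨m, hxm, hm⟩ := L.interp x _ hxwt
    obtain ⟨a, b, hay, hbwt, hmeq⟩ := L.decomp y wt m hm
    have hbv₁ : ∀ s, L.prec s b → L.prec s v₁ → s = L.zero := by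
      intro s hsb hsv
      have h3 : L.prec s (L.inf wt v₁) := mult' (L.trans hsb hbwt) hsv
      rw [hwtv₁] at h3
      exact prec_zero h3
    -- every member of U meets b
    have halpha : ∀ u ∈ U, L.inf b u ≠ L.zero := by
      intro u hu h0
      obtain ⟨u₁, hu₁U, hu₁u⟩ := mem_round hUf hu
      obtain ⟨T, hT⟩ := L.cofin (L.sup b (L.sup u (L.sup x y)))
      have huT : L.prec u T :=
        ple_prec (fun z hz => L.le_sup_right b _ z (L.le_sup_left u _ z hz)) hT
      obtain ⟨w₂, hw₂u₁, hw₂u⟩ := L.compl u₁ u T hu₁u huT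
      have hmle : L.ple m (L.sup y w₂) := by
        intro z hz
        rw [hmeq] at hz
        obtain ⟨p, q, hpa, hqb, hzeq⟩ := L.decomp a b z hz
        have hqT : L.prec q T :=
          L.trans (prec_ple hqb (fun s hs => L.le_sup_left b _ s hs)) hT
        have hqw₂ : L.prec q w₂ := by
          refine prec_cancel hqT hw₂u ?_
          intro s hsq hsu
          have h3 : L.prec s (L.inf b u) := mult' (L.trans hsq hqb) hsu
          rw [h0] at h3
          exact prec_zero h3
        rw [hzeq]
        exact L.add p y q w₂ (L.trans hpa hay) hqw₂
      exact hUstar u₁ hu₁U w₂ hw₂u₁ (prec_ple hxm hmle)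
    set Vb : Set B := {r | ∃ u ∈ U, L.prec (L.inf b u) r} with hVbdef
    obtain ⟨hVbf, hVbp, hUVb⟩ := ext_filter hUf hUne b halpha
    by_cases hVbU : Vb = U
    · -- extension by b adds nothing: contradict properness of W
      obtain ⟨v₂, hv₂W, hv₂v₁⟩ := mem_round hWf hv₁W
      obtain ⟨v₃, hv₃W, hv₃v₂⟩ := mem_round hWf hv₂W
      obtain ⟨T₃, hT₃⟩ := L.cofin (L.sup b v₂)
      obtain ⟨r, hrv₃, hrv₂⟩ := L.compl v₃ v₂ T₃ hv₃v₂
        (ple_prec (fun s hs => L.le_sup_right b v₂ s hs) hT₃)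
      obtain ⟨u₀, hu₀⟩ := hUne
      have hq : L.prec (L.inf b u₀) r := by
        have hqT : L.prec (L.inf b u₀) T₃ :=
          ple_prec (fun s hs => L.le_sup_left b v₂ s (L.inf_le_left b u₀ s hs)) hT₃
        refine prec_cancel hqT hrv₂ ?_
        intro s hsq hsv₂
        exact hbv₁ s (L.inf_le_left b u₀ s hsq) (L.trans hsv₂ hv₂v₁)
      have hrU : r ∈ U := by
        rw [← hVbU]
        exact ⟨u₀, hu₀, hq⟩
      obtain ⟨s, hsW, hsr, hsv₃⟩ := hWf.2 r v₃ (hUW hrU) hv₃W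
      have h3 : L.prec s L.zero := by rw [← hrv₃]; exact mult' hsr hsv₃
      exact zero_notMem hWf hWp (prec_zero h3 ▸ hsW)
    · -- Vb is a strictly larger member of P: contradict maximality
      have hstarVb : Star L x y Vb := by
        rintro v' ⟨u₂, hu₂U, hqv'⟩ w' hw'v' hxw'
        have hkey0 : ∀ s, L.prec s w' → L.prec s b → L.prec s u₂ → s = L.zero := by
          intro s h1 h2 h3
          have h4 : L.prec s (L.inf w' v') := mult' h1 (L.trans (mult' h2 h3) hqv')
          rw [hw'v'] at h4
          exact prec_zero h4
        obtain ⟨m', hxm', hm'⟩ := L.interp x _ hxw'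
        obtain ⟨a', b'', ha'y, hb''w', hm'eq⟩ := L.decomp y w' m' hm'
        obtain ⟨u₃, hu₃U, hu₃u₂⟩ := mem_round hUf hu₂U
        obtain ⟨u₄, hu₄U, hu₄u₃⟩ := mem_round hUf hu₃U
        obtain ⟨T₂, hT₂⟩ := L.cofin (L.sup b u₂)
        obtain ⟨W₀, hW₀u₄, hW₀u₃⟩ := L.compl u₄ u₃ T₂ hu₄u₃
          (L.trans hu₃u₂ (ple_prec (fun s hs => L.le_sup_right b u₂ s hs) hT₂))
        have hMle : L.ple (L.inf m m') (L.sup y W₀) := by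
          intro z hz
          have hzm : L.prec z m := L.inf_le_left m m' z hz
          have hzm' : L.prec z m' := L.inf_le_right m m' z hz
          rw [hmeq] at hzm
          obtain ⟨sa, sb, hsaa, hsbb, hzeq⟩ := L.decomp a b z hzm
          have hsbm' : L.prec sb m' :=
            ple_prec (fun s hs => by rw [hzeq]; exact L.le_sup_right sa sb s hs) hzm'
          rw [hm'eq] at hsbm'
          obtain ⟨ta, tb, htaa', htbb'', hsbeq⟩ := L.decomp a' b'' sb hsbm'
          have htbB : L.prec tb b :=
            ple_prec (fun s hs => by rw [hsbeq]; exact L.le_sup_right ta tb s hs) hsbb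
          have htbT : L.prec tb T₂ :=
            L.trans (prec_ple htbB (fun s hs => L.le_sup_left b u₂ s hs)) hT₂
          have htbW₀ : L.prec tb W₀ := by
            refine prec_cancel htbT hW₀u₃ ?_
            intro s hstb hsu₃
            exact hkey0 s (L.trans (L.trans hstb htbb'') hb''w') (L.trans hstb htbB)
              (L.trans hsu₃ hu₃u₂)
          have h1 : L.prec sb (L.sup y W₀) := by
            rw [hsbeq]
            exact L.add ta y tb W₀ (L.trans htaa' ha'y) htbW₀
          have h2 : L.prec z (L.sup y (L.sup y W₀)) := by
            rw [hzeq]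
            exact L.add sa y sb _ (L.trans hsaa hay) h1
          exact prec_ple h2 (fun s hs => L.sup_le y (L.sup y W₀) (L.sup y W₀)
            (fun w hw => L.le_sup_left y W₀ w hw) (fun w hw => hw) s hs)
        exact hUstar u₄ hu₄U W₀ hW₀u₄ (prec_ple (mult' hxm hxm') hMle)
      exact hVbU (Set.Subset.antisymm
        (hUmax.2 ⟨⟨hVbf, hVbp⟩, hUV₀.trans hUVb, hstarVb⟩ hUVb) hUVb)
  refine ⟨U, hultra, ?_, ?_⟩
  · -- every member of U meets x
    intro u hu h0
    obtain ⟨u₁, hu₁U, hu₁u⟩ := mem_round hUf hu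
    obtain ⟨T, hT⟩ := L.cofin (L.sup u (L.sup x y))
    obtain ⟨w, hwu₁, hwu⟩ := L.compl u₁ u T hu₁u
      (ple_prec (fun s hs => L.le_sup_left u _ s hs) hT)
    have hxT : L.prec x T :=
      ple_prec (fun s hs => L.le_sup_right u _ s (L.le_sup_left x y s hs)) hT
    have hxw : L.prec x w := by
      refine prec_cancel hxT hwu ?_
      intro s hsx hsu
      have h3 : L.prec s (L.inf u x) := mult' hsu hsx
      rw [h0] at h3
      exact prec_zero h3
    exact hUstar u₁ hu₁U w hwu₁ (prec_ple hxw (fun s hs => L.le_sup_right y w s hs))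
  · -- y ∉ U
    intro hy
    obtain ⟨y₁, hy₁U, hy₁y⟩ := mem_round hUf hy
    obtain ⟨y₂, hy₂U, hy₂y₁⟩ := mem_round hUf hy₁U
    obtain ⟨T, hT⟩ := L.cofin (L.sup x (L.sup y y₁))
    obtain ⟨w, hwy₂, hwy₁⟩ := L.compl y₂ y₁ T hy₂y₁
      (ple_prec (fun s hs => L.le_sup_right x _ s (L.le_sup_right y y₁ s hs)) hT)
    have hxT : L.prec x T := ple_prec (fun s hs => L.le_sup_left x _ s hs) hT
    have hTle : L.ple T (L.sup y w) := by
      intro z hz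
      rw [← hwy₁] at hz
      obtain ⟨p, q, hpw, hqy₁, hzeq⟩ := L.decomp w y₁ z hz
      have h3 : L.prec z (L.sup w y) := by
        rw [hzeq]
        exact L.add p w q y hpw (L.trans hqy₁ hy₁y)
      exact prec_sup_comm h3
    exact hUstar y₂ hy₂U w hwy₂ (prec_ple hxT hTle)

lemma prec_of_closure_subset {x y : B} (h : closure (L.Ox x) ⊆ L.Ox y) : L.prec x y := by
  by_contra hxy
  have hx0 : x ≠ L.zero := fun h0 => hxy (by rw [h0]; exact L.min y)
  obtain ⟨U, hU, hmeets, hy⟩ := exists_ultra_of_not_prec hxy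
  exact hy (h (mem_closure_of_meets ⟨x, hx0⟩ (U := ⟨U, hU⟩) hmeets))

end BasicLattice
namespace BasicLattice

variable {B : Type} {L : BasicLattice B}

lemma isCompact_closure_Ox (x : B) : IsCompact (closure (L.Ox x)) := by
  by_cases hx : x = L.zero
  · rw [hx, Ox_zero, closure_empty]
    exact isCompact_empty
  · have hB : ∃ b : B, b ≠ L.zero := ⟨x, hx⟩
    rw [isCompact_iff_ultrafilter_le_nhds]
    intro f hf
    have hfs : closure (L.Ox x) ∈ f := Filter.le_principal_iff.mp hf
    set M : Set B := {z | ∃ w, L.prec w z ∧ L.Ox w ∈ f} with hM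
    have hMf : L.IsPrecFilter M := by
      constructor
      · rintro r z ⟨w, hwz, hwf⟩ hzr
        exact ⟨w, L.trans hwz hzr, hwf⟩
      · rintro z₁ z₂ ⟨w₁, h₁, hf₁⟩ ⟨w₂, h₂, hf₂⟩
        have hmem : L.Ox (L.inf w₁ w₂) ∈ f := by
          rw [← Ox_inf]
          exact Filter.inter_mem hf₁ hf₂
        obtain ⟨ρ, hρ₁, hρ₂⟩ := L.interp _ _ (L.mult w₁ z₁ w₂ z₂ h₁ h₂)
        exact ⟨ρ, ⟨_, hρ₁, hmem⟩, L.inf_le_left z₁ z₂ ρ hρ₂, L.inf_le_right z₁ z₂ ρ hρ₂⟩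
    have hMp : M ≠ Set.univ := by
      intro h
      have h0 : L.zero ∈ M := by rw [h]; trivial
      obtain ⟨w, hw0, hwf⟩ := h0
      rw [prec_zero hw0, Ox_zero] at hwf
      exact Filter.empty_notMem (↑f : Filter L.Spec) hwf
    have hMultra : L.IsUltra M := by
      refine ⟨hMf, hMp, ?_⟩
      intro W hWf hWp hMW
      by_contra hne
      obtain ⟨v, hvW, hvM⟩ := Set.not_subset.mp
        (fun hsub => hne (Set.Subset.antisymm hMW hsub))
      obtain ⟨v₁, hv₁W, hv₁⟩ := mem_round hWf hvW
      obtain ⟨v₂, hv₂W, hv₂⟩ := mem_round hWf hv₁W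
      obtain ⟨v₃, hv₃W, hv₃⟩ := mem_round hWf hv₂W
      obtain ⟨v₄, hv₄W, hv₄⟩ := mem_round hWf hv₃W
      have hOv₁ : L.Ox v₁ ∉ f := fun hmem => hvM ⟨v₁, hv₁, hmem⟩
      have hOc : (L.Ox v₁)ᶜ ∈ f := Ultrafilter.compl_mem_iff_notMem.mpr hOv₁
      obtain ⟨T, hT⟩ := L.cofin (L.sup x v)
      have hxT : L.prec x T := ple_prec (fun s hs => L.le_sup_left x v s hs) hT
      have hvT : L.prec v T := ple_prec (fun s hs => L.le_sup_right x v s hs) hT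
      have hv₂T : L.prec v₂ T := L.trans hv₂ (L.trans hv₁ hvT)
      obtain ⟨t', hxt', ht'T⟩ := L.interp x T hxT
      obtain ⟨u, hu₃, hu₂⟩ := L.compl v₃ v₂ T hv₃ hv₂T
      have hOu : L.Ox u ∈ f := by
        have hsub : closure (L.Ox x) ∩ (L.Ox v₁)ᶜ ⊆ L.Ox u := by
          rintro U' ⟨hc, hnv₁⟩
          have hne' := ultra_nonempty hB U'.2
          have hmeets := mem_closure_meets hc
          have ht'U : t' ∈ U'.1 := cl_mem U'.2 hne' hxt' hmeets
          have hTU : T ∈ U'.1 := mem_up U'.2.1 ht'U ht'T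
          have hsupU : L.sup u v₂ ∈ U'.1 := by rw [hu₂]; exact hTU
          rcases sup_split U'.2 hsupU with h | h
          · exact h
          · exact absurd (mem_up U'.2.1 h hv₂) hnv₁
        exact Filter.mem_of_superset (Filter.inter_mem hfs hOc) hsub
      obtain ⟨T', hTT'⟩ := L.cofin T
      obtain ⟨z, hz₄, hz₃⟩ := L.compl v₄ v₃ T' hv₄ (L.trans hv₃ (L.trans hv₂T hTT'))
      have huz : L.prec u z := by
        have huT' : L.prec u T' :=
          ple_prec (fun s hs => by rw [← hu₂]; exact L.le_sup_left u v₂ s hs) hTT'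
        refine prec_cancel huT' hz₃ ?_
        intro s hsu hsv₃
        have h3 : L.prec s (L.inf u v₃) := mult' hsu hsv₃
        rw [hu₃] at h3
        exact prec_zero h3
      have hzM : z ∈ M := ⟨u, huz, hOu⟩
      obtain ⟨s, hsW, hsz, hsv₄⟩ := hWf.2 z v₄ (hMW hzM) hv₄W
      have h3 : L.prec s L.zero := by rw [← hz₄]; exact mult' hsz hsv₄
      exact zero_notMem hWf hWp (prec_zero h3 ▸ hsW)
    set Uhat : L.Spec := ⟨M, hMultra⟩ with hUhat
    have hle : ↑f ≤ nhds Uhat := by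
      rw [Filter.le_def]
      intro s hs
      obtain ⟨t, ⟨c, rfl⟩, hUhatt, hts⟩ := (basis hB).mem_nhds_iff.mp hs
      obtain ⟨w, hwc, hwf⟩ := hUhatt
      exact Filter.mem_of_superset hwf ((Ox_mono (ple_of_prec hwc)).trans hts)
    refine ⟨Uhat, ?_, hle⟩
    have hcc : Uhat ∈ closure (closure (L.Ox x)) := by
      rw [mem_closure_iff_nhds]
      intro t ht
      exact Filter.nonempty_of_mem (Filter.inter_mem (hle ht) hfs)
    rwa [closure_closure] at hcc

lemma locallyCompact : LocallyCompactSpace L.Spec := by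
  by_cases hB : ∃ b : B, b ≠ L.zero
  · constructor
    intro U n hn
    obtain ⟨t, ⟨c, rfl⟩, hUt, htn⟩ := (basis hB).mem_nhds_iff.mp hn
    obtain ⟨c₁, hc₁U, hc₁c⟩ := mem_round U.2.1 hUt
    obtain ⟨c₂, hc₂U, hc₂c₁⟩ := mem_round U.2.1 hc₁U
    refine ⟨closure (L.Ox c₂), ?_, ?_, isCompact_closure_Ox c₂⟩
    · exact Filter.mem_of_superset ((isOpen_Ox c₂).mem_nhds hc₂U) subset_closure
    · exact (closure_Ox_subset hc₂c₁).trans ((Ox_mono (ple_of_prec hc₁c)).trans htn)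
  · push_neg at hB
    have hsub : Subsingleton L.Spec := by
      constructor
      intro U V
      apply Subtype.ext
      have hU : U.1 = ∅ := Set.eq_empty_iff_forall_notMem.mpr
        (fun a ha => mem_ne_zero U.2.1 U.2.2.1 ha (hB a))
      have hV : V.1 = ∅ := Set.eq_empty_iff_forall_notMem.mpr
        (fun a ha => mem_ne_zero V.2.1 V.2.2.1 ha (hB a))
      rw [hU, hV]
    constructor
    intro U n hn
    refine ⟨Set.univ, Filter.univ_mem, fun V _ => ?_, Set.subsingleton_univ.isCompact⟩
    have h3 : V = U := Subsingleton.elim V U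
    rw [h3]
    exact mem_of_mem_nhds hn

end BasicLattice

/-- For any basic lattice B, the Stone space of ≺-ultrafilters is locally compact
Hausdorff, with O_x ∩ O_y = O_{x ∧ y}, O_x ∪ O_y = O_{x ∨ y}, disjointness of
O_x, O_y equivalent to x ∧ y = 0, compact containment closure(O_x) ⊆ O_y
equivalent to x ≺ y, and each closure(O_x) compact. -/
theorem basicLattice_stone_space {B : Type} (L : BasicLattice B) :
    LocallyCompactSpace L.Spec ∧ T2Space L.Spec ∧
    (∀ x y : B, L.Ox x ∩ L.Ox y = L.Ox (L.inf x y)) ∧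
    (∀ x y : B, L.Ox x ∪ L.Ox y = L.Ox (L.sup x y)) ∧
    (∀ x y : B, (L.Ox x ∩ L.Ox y = ∅ ↔ L.inf x y = L.zero)) ∧
    (∀ x y : B, (closure (L.Ox x) ⊆ L.Ox y ↔ L.prec x y)) ∧
    (∀ x : B, IsCompact (closure (L.Ox x))) := by
  exact ⟨BasicLattice.locallyCompact, BasicLattice.t2,
    fun x y => BasicLattice.Ox_inf x y,
    fun x y => BasicLattice.Ox_sup x y,
    fun x y => BasicLattice.Ox_disjoint x y,
    fun x y => ⟨BasicLattice.prec_of_closure_subset, BasicLattice.closure_Ox_subset⟩,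
    fun x => BasicLattice.isCompact_closure_Ox x⟩
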